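/- Let n be a power of 2 and let b be a power of 2 with 1 < b ≤ n. For each power of 2 i with 2 ≤ i ≤ b, let B_i be a butterfly factor matrix of size i (i.e., B_i ∈ BD(i,n) ∩ DB(i/2,n)). Then the product B_b · B_{b/2} · ⋯ · B_2 lies in BD(b,n). -/
import Mathlib


open Matrix

/-- `BD b n R`: `R` is block-diagonal with `n/b` diagonal blocks of size `b × b`. -/
def BD {𝔽 : Type*} [Field 𝔽] (b n : ℕ) (R : Matrix (Fin n) (Fin n) 𝔽) : Prop :=
  ∀ i j : Fin n, i.val / b ≠ j.val / b → R i j = 0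

/-- `DB b n L`: `L[i,j] = 0` whenever `i ≢ j (mod b)`. -/
def DB {𝔽 : Type*} [Field 𝔽] (b n : ℕ) (L : Matrix (Fin n) (Fin n) 𝔽) : Prop :=
  ∀ i j : Fin n, i.val % b ≠ j.val % b → L i j = 0

lemma BD_one {𝔽 : Type*} [Field 𝔽] (b n : ℕ) : BD b n (1 : Matrix (Fin n) (Fin n) 𝔽) := by
  intro i j h
  have : i ≠ j := by rintro rfl; exact h rfl
  simp [Matrix.one_apply, this]

lemma BD_mul {𝔽 : Type*} [Field 𝔽] {b n : ℕ} {R S : Matrix (Fin n) (Fin n) 𝔽}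
    (hR : BD b n R) (hS : BD b n S) : BD b n (R * S) := by
  intro i j h
  rw [Matrix.mul_apply]
  apply Finset.sum_eq_zero
  intro l _
  by_cases hl : i.val / b = l.val / b
  · rw [hS l j (hl ▸ h), mul_zero]
  · rw [hR i l hl, zero_mul]

lemma BD_mono {𝔽 : Type*} [Field 𝔽] {i s n : ℕ} (his : i ≤ s)
    {R : Matrix (Fin n) (Fin n) 𝔽} (hR : BD (2 ^ i) n R) : BD (2 ^ s) n R := by
  intro a c h
  apply hR
  intro heq
  apply h
  have : (2:ℕ) ^ s = 2 ^ i * 2 ^ (s - i) := by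
    rw [← pow_add]; congr 1; omega
  rw [this, ← Nat.div_div_eq_div_mul, ← Nat.div_div_eq_div_mul, heq]

/-- for `n = 2^k`, `b = 2^s` with `1 < b ≤ n`, and butterfly factor matrices
`B_i ∈ BD(2^i, n) ∩ DB(2^{i-1}, n)` for `2 ≤ 2^i ≤ b`, the product
`B_b · B_{b/2} · ⋯ · B_2` lies in `BD(b,n)`. -/
theorem butterfly_suffix_in_bd {𝔽 : Type*} [Field 𝔽] (k s n b : ℕ)
    (hn : n = 2 ^ k) (hb : b = 2 ^ s) (hs : 1 ≤ s) (hsk : s ≤ k)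
    (B : ℕ → Matrix (Fin n) (Fin n) 𝔽)
    (hB : ∀ i, 1 ≤ i → i ≤ s → BD (2 ^ i) n (B i) ∧ DB (2 ^ (i - 1)) n (B i)) :
    BD b n (((List.range s).map fun t => B (s - t)).prod) := by
  subst hb
  have key : ∀ L : List (Matrix (Fin n) (Fin n) 𝔽),
      (∀ M ∈ L, BD (2 ^ s) n M) → BD (2 ^ s) n L.prod := by
    intro L
    induction L with
    | nil => intro _; simpa using BD_one (2 ^ s) n
    | cons hd tl ih =>
        intro hmem
        rw [List.prod_cons]
        exact BD_mul (hmem hd (by simp)) (ih fun M hM => hmem M (by simp [hM]))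
  apply key
  intro M hM
  simp only [List.mem_map, List.mem_range] at hM
  obtain ⟨t, ht, rfl⟩ := hM
  exact BD_mono (Nat.sub_le s t) ((hB (s - t) (by omega) (by omega)).1)
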